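/- arXiv:2409.07159 — 2 statements merged into one kernel-verified Lean document; each statement's English description precedes it below -/
import Mathlib

section
/- For a real parameter p with |p| < 1, the improper integral ∫₀^∞ x^p / (1 + x²) dx equals π / (2 cos(pπ/2)). -/
open MeasureTheory Real Set

lemma betaReal (a : ℝ) (h0 : 0 < a) (h1 : a < 1) :
    ∫ u in Ioo (0:ℝ) 1, u ^ (a-1) * (1-u) ^ (-a) = π / Real.sin (π * a) := by
  have hre0 : 0 < Complex.re (a : ℂ) := by simpa using h0
  have hre1 : 0 < Complex.re ((1 - a : ℝ) : ℂ) := by simpa using (by linarith : (0:ℝ) < 1 - a)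
  have hB := Complex.Gamma_mul_Gamma_eq_betaIntegral hre0 hre1
  have hsum : (a : ℂ) + ((1 - a : ℝ) : ℂ) = 1 := by push_cast; ring
  rw [hsum, Complex.Gamma_one, one_mul] at hB
  have hrefl : Complex.Gamma a * Complex.Gamma ((1 - a : ℝ) : ℂ) = π / Complex.sin (π * a) := by
    have := Complex.Gamma_mul_Gamma_one_sub (a : ℂ)
    rw [show ((1:ℂ) - a) = ((1 - a : ℝ) : ℂ) by push_cast; ring] at this
    exact this
  have key : Complex.betaIntegral a ((1 - a : ℝ) : ℂ) =
      ((∫ u in Ioo (0:ℝ) 1, u ^ (a-1) * (1-u) ^ (-a) : ℝ) : ℂ) := by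
    rw [Complex.betaIntegral]
    have heq : EqOn (fun x : ℝ => (x : ℂ) ^ ((a:ℂ) - 1) * ((1:ℂ) - x) ^ (((1 - a : ℝ) : ℂ) - 1))
        (fun x : ℝ => ((x ^ (a-1) * (1-x) ^ (-a) : ℝ) : ℂ)) (uIcc (0:ℝ) 1) := by
      intro x hx
      rw [uIcc_of_le (by norm_num : (0:ℝ) ≤ 1)] at hx
      have hx0 : (0:ℝ) ≤ x := hx.1
      have hx1 : (0:ℝ) ≤ 1 - x := by linarith [hx.2]
      simp only
      rw [show ((1:ℂ) - x) = ((1 - x : ℝ) : ℂ) by push_cast; ring,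
        show ((a:ℂ) - 1) = ((a - 1 : ℝ) : ℂ) by push_cast; ring,
        show (((1 - a : ℝ) : ℂ) - 1) = ((-a : ℝ) : ℂ) by push_cast; ring,
        ← Complex.ofReal_cpow hx0, ← Complex.ofReal_cpow hx1, ← Complex.ofReal_mul]
    rw [intervalIntegral.integral_congr heq, intervalIntegral.integral_ofReal,
      intervalIntegral.integral_of_le (by norm_num : (0:ℝ) ≤ 1), integral_Ioc_eq_integral_Ioo]
  rw [hrefl, key] at hB
  have : ((π / Real.sin (π * a) : ℝ) : ℂ) = ↑π / Complex.sin (↑π * ↑a) := by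
    push_cast [Complex.ofReal_sin]
    norm_num
  rw [← this] at hB
  exact_mod_cast hB.symm

theorem integral_rpow_div_one_add_sq (p : ℝ) (hp : |p| < 1) :
    ∫ x in Ioi (0:ℝ), x ^ p / (1 + x ^ 2) = π / (2 * Real.cos (p * π / 2)) := by
  obtain ⟨hp1, hp2⟩ := abs_lt.mp hp
  set a : ℝ := (p + 1) / 2 with ha
  have ha0 : 0 < a := by simp only [ha]; linarith
  have ha1 : a < 1 := by simp only [ha]; linarith
  set f : ℝ → ℝ := fun u => Real.sqrt (u / (1 - u)) with hf
  set f' : ℝ → ℝ := fun u => (1 / (1 - u) ^ 2) / (2 * Real.sqrt (u / (1 - u))) with hf'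
  have himg : f '' Ioo 0 1 = Ioi (0:ℝ) := by
    ext y
    constructor
    · rintro ⟨u, ⟨hu0, hu1⟩, rfl⟩
      exact Real.sqrt_pos.mpr (div_pos hu0 (by linarith))
    · intro hy
      have hy0 : 0 < y := hy
      refine ⟨y^2 / (1 + y^2), ⟨?_, ?_⟩, ?_⟩
      · positivity
      · rw [div_lt_one (by positivity)]; linarith
      · have h2 : y ^ 2 / (1 + y ^ 2) / (1 - y ^ 2 / (1 + y ^ 2)) = y ^ 2 := by
          have hpos : (0:ℝ) < 1 + y ^ 2 := by positivity
          field_simp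
          ring
        show Real.sqrt _ = y
        rw [h2, Real.sqrt_sq hy0.le]
  have hderiv : ∀ u ∈ Ioo (0:ℝ) 1, HasDerivWithinAt f (f' u) (Ioo 0 1) u := by
    intro u ⟨hu0, hu1⟩
    have h1u : (0:ℝ) < 1 - u := by linarith
    have hg : HasDerivAt (fun u : ℝ => u / (1 - u)) (1 / (1 - u) ^ 2) u := by
      have := (hasDerivAt_id u).div ((hasDerivAt_id u).const_sub 1) (by positivity)
      convert this using 1
      · rfl
      · rfl
      · rfl
      · simp only [id]
        field_simp
        ring
    have hne : u / (1 - u) ≠ 0 := ne_of_gt (div_pos hu0 h1u)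
    exact (hg.sqrt hne).hasDerivWithinAt
  have hinj : InjOn f (Ioo 0 1) := by
    intro u ⟨hu0, hu1⟩ v ⟨hv0, hv1⟩ huv
    have h1 : u / (1 - u) = v / (1 - v) :=
      (Real.sqrt_inj (div_pos hu0 (by linarith)).le (div_pos hv0 (by linarith)).le).mp huv
    have h1u : (1:ℝ) - u ≠ 0 := by intro h; linarith [h]
    have h1v : (1:ℝ) - v ≠ 0 := by intro h; linarith [h]
    field_simp at h1
    nlinarith [h1]
  have hsub := integral_image_eq_integral_abs_deriv_smul measurableSet_Ioo hderiv hinj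
    (fun x => x ^ p / (1 + x ^ 2))
  rw [himg] at hsub
  rw [hsub]
  have hcongr : ∫ u in Ioo (0:ℝ) 1, |f' u| • (f u ^ p / (1 + f u ^ 2))
      = ∫ u in Ioo (0:ℝ) 1, (1/2 : ℝ) * (u ^ (a - 1) * (1 - u) ^ (-a)) := by
    refine setIntegral_congr_fun measurableSet_Ioo fun u hu => ?_
    obtain ⟨hu0, hu1⟩ := hu
    have h1u : (0:ℝ) < 1 - u := by linarith
    have hg0 : 0 < u / (1 - u) := div_pos hu0 h1u
    have hs0 : 0 < Real.sqrt (u / (1 - u)) := Real.sqrt_pos.mpr hg0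
    have hf'pos : 0 < f' u := by
      rw [hf']; positivity
    rw [smul_eq_mul, abs_of_pos hf'pos]
    have hsq : f u ^ 2 = u / (1 - u) := Real.sq_sqrt hg0.le
    have h1pf : 1 + f u ^ 2 = 1 / (1 - u) := by
      rw [hsq]; field_simp; ring
    have hsrt : Real.sqrt (u / (1 - u)) = u ^ (1/2 : ℝ) * (1 - u) ^ (-(1/2) : ℝ) := by
      rw [Real.sqrt_eq_rpow, Real.div_rpow hu0.le h1u.le, Real.rpow_neg h1u.le, div_eq_mul_inv]
    have hfp : f u ^ p = u ^ (p/2) * (1 - u) ^ (-(p/2)) := by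
      rw [hf]
      simp only
      rw [Real.sqrt_eq_rpow, ← Real.rpow_mul hg0.le,
        show (1/2 : ℝ) * p = p / 2 by ring,
        Real.div_rpow hu0.le h1u.le, Real.rpow_neg h1u.le, div_eq_mul_inv]
    have e1 : u ^ (a - 1) * u ^ (1/2 : ℝ) = u ^ (p/2) := by
      rw [← Real.rpow_add hu0]; congr 1; rw [ha]; ring
    have e2 : (1-u) ^ (-a) * (1-u) ^ (-(1/2) : ℝ) * (1-u) = (1-u) ^ (-(p/2)) := by
      rw [← Real.rpow_add h1u, ← Real.rpow_add_one (ne_of_gt h1u)]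
      congr 1; rw [ha]; ring
    have hmain : f u ^ p * (1 - u) =
        (u ^ (a-1) * (1-u) ^ (-a)) * (Real.sqrt (u / (1-u)) * (1-u)^2) := by
      rw [hfp, hsrt, ← e1, ← e2]; ring
    have hdiv : f u ^ p / (1 + f u ^ 2) = f u ^ p * (1 - u) := by
      rw [h1pf]; field_simp
    rw [hdiv, hmain, hf']
    field_simp
  rw [hcongr, integral_const_mul, betaReal a ha0 ha1]
  have hsin : Real.sin (π * a) = Real.cos (p * π / 2) := by
    rw [ha, show π * ((p + 1) / 2) = p * π / 2 + π / 2 by ring, Real.sin_add_pi_div_two]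
  rw [hsin]
  have hcos : Real.cos (p * π / 2) ≠ 0 := by
    have := Real.cos_pos_of_mem_Ioo (show p * π / 2 ∈ Ioo (-(π/2)) (π/2) by
      constructor
      · nlinarith [Real.pi_pos]
      · nlinarith [Real.pi_pos])
    exact ne_of_gt this
  field_simp
end

section
/- Let g and N denote the standard Gaussian probability density function and cumulative distribution function. For any real constant c, ∫₀^∞ N(-c·z) g(z) dz = 1/4 - (1/(2π)) arctan(c). -/
open MeasureTheory Real Set

lemma aux_int_mul_exp {b : ℝ} (hb : 0 < b) :
    ∫ r in Ioi (0:ℝ), r * Real.exp (-b * r^2) = (2*b)⁻¹ := by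
  have hderiv : ∀ x ∈ Ioi (0:ℝ), HasDerivAt (fun x : ℝ => -(2*b)⁻¹ * Real.exp (-b*x^2))
      (x * Real.exp (-b*x^2)) x := by
    intro x _
    have h1 : HasDerivAt (fun x : ℝ => -b*x^2) (-b*(2*x)) x := by
      simpa using ((hasDerivAt_pow 2 x).const_mul (-b))
    have h2 := (h1.exp).const_mul (-(2*b)⁻¹)
    refine h2.congr_deriv ?_
    field_simp [hb.ne']
  have htend : Filter.Tendsto (fun x : ℝ => -(2*b)⁻¹ * Real.exp (-b*x^2))
      Filter.atTop (nhds 0) := by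
    have h1 : Filter.Tendsto (fun x : ℝ => b * x^2) Filter.atTop Filter.atTop :=
      (Filter.tendsto_pow_atTop two_ne_zero).const_mul_atTop hb
    have h2 : Filter.Tendsto (fun x : ℝ => Real.exp (-b*x^2)) Filter.atTop (nhds 0) := by
      have := Real.tendsto_exp_atBot.comp (Filter.tendsto_neg_atTop_atBot.comp h1)
      exact this.congr (fun x => by simp [Function.comp, neg_mul])
    simpa using h2.const_mul (-(2*b)⁻¹)
  have hint : IntegrableOn (fun x : ℝ => x * Real.exp (-b*x^2)) (Ioi 0) :=
    (integrable_mul_exp_neg_mul_sq hb).integrableOn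
  have hcont : ContinuousWithinAt (fun x : ℝ => -(2*b)⁻¹ * Real.exp (-b*x^2)) (Ici 0) 0 :=
    (Continuous.continuousWithinAt (by continuity))
  have := integral_Ioi_of_hasDerivAt_of_tendsto hcont hderiv hint htend
  simp only [this]
  norm_num

theorem integral_gaussianCdf_mul_pdf (c : ℝ) (g N : ℝ → ℝ)
    (hg : ∀ z, g z = (Real.sqrt (2*π))⁻¹ * Real.exp (-z^2/2))
    (hN : ∀ x, N x = ∫ t in Iic x, g t) :
    ∫ z in Ioi (0:ℝ), N (-c*z) * g z = 1/4 - (1/(2*π)) * Real.arctan c := by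
  have h2π : (0:ℝ) < 2*π := by positivity
  have hNf : N = fun x => ∫ t in Iic x, g t := funext hN
  subst hNf
  have geven : ∀ x, g (-x) = g x := fun x => by rw [hg, hg, neg_sq]
  have hsq : (Real.sqrt (2*π))⁻¹ * (Real.sqrt (2*π))⁻¹ = (2*π)⁻¹ := by
    rw [← mul_inv, Real.mul_self_sqrt h2π.le]
  set f : ℝ → ℝ → ℝ := fun z s => (2*π)⁻¹ * (z * Real.exp (-((1+s^2)/2) * z^2)) with hf
  have hpt : ∀ z s : ℝ, z * g (z*s) * g z = f z s := by
    intro z s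
    rw [hg, hg, hf]
    have he : Real.exp (-(z*s)^2/2) * Real.exp (-z^2/2)
        = Real.exp (-((1+s^2)/2) * z^2) := by
      rw [← Real.exp_add]; congr 1; ring
    calc z * ((Real.sqrt (2*π))⁻¹ * Real.exp (-(z*s)^2/2))
          * ((Real.sqrt (2*π))⁻¹ * Real.exp (-z^2/2))
        = ((Real.sqrt (2*π))⁻¹ * (Real.sqrt (2*π))⁻¹)
          * (z * (Real.exp (-(z*s)^2/2) * Real.exp (-z^2/2))) := by ring
      _ = (2*π)⁻¹ * (z * Real.exp (-((1+s^2)/2) * z^2)) := by rw [hsq, he]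
  have step1 : ∀ z ∈ Ioi (0:ℝ), (∫ t in Iic (-c*z), g t) * g z = ∫ s in Ioi c, f z s := by
    intro z hz
    have hz' : (0:ℝ) < z := hz
    have hrefl : (∫ t in Iic (-c*z), g t) = ∫ t in Ioi (c*z), g t := by
      rw [neg_mul, ← integral_comp_neg_Ioi]
      exact setIntegral_congr_fun measurableSet_Ioi (fun x _ => geven x)
    have hscale : (∫ t in Ioi (c*z), g t) = z * ∫ s in Ioi c, g (z*s) := by
      rw [integral_comp_mul_left_Ioi g c hz', smul_eq_mul, ← mul_assoc,
        mul_inv_cancel₀ hz'.ne', one_mul, mul_comm z c]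
    rw [hrefl, hscale]
    rw [← funext (hpt z), MeasureTheory.integral_mul_const, MeasureTheory.integral_const_mul]
  have hinner : ∀ s : ℝ, (∫ z in Ioi (0:ℝ), f z s) = (2*π)⁻¹ * (1+s^2)⁻¹ := by
    intro s
    have hb : (0:ℝ) < (1+s^2)/2 := by positivity
    rw [hf]
    simp only []
    rw [MeasureTheory.integral_const_mul, aux_int_mul_exp hb]
    congr 1
    rw [mul_div_cancel₀ _ (two_ne_zero)]
  have hbpos : ∀ s : ℝ, (0:ℝ) < (1+s^2)/2 := fun s => by positivity
  have hmeas : AEStronglyMeasurable (Function.uncurry f)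
      ((volume.restrict (Ioi (0:ℝ))).prod (volume.restrict (Ioi c))) := by
    apply Continuous.aestronglyMeasurable
    apply Continuous.mul continuous_const
    apply Continuous.mul continuous_fst
    apply Real.continuous_exp.comp
    continuity
  have hfub : Integrable (Function.uncurry f)
      ((volume.restrict (Ioi (0:ℝ))).prod (volume.restrict (Ioi c))) := by
    rw [MeasureTheory.integrable_prod_iff' hmeas]
    constructor
    · refine Filter.Eventually.of_forall (fun s => ?_)
      exact (((integrable_mul_exp_neg_mul_sq (hbpos s)).const_mul ((2*π)⁻¹)).restrict)
    · have key : ∀ s : ℝ, (∫ z in Ioi (0:ℝ), ‖Function.uncurry f (z, s)‖)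
          = (2*π)⁻¹ * (1+s^2)⁻¹ := by
        intro s
        rw [← hinner s]
        refine setIntegral_congr_fun measurableSet_Ioi (fun z hz => ?_)
        have hz' : (0:ℝ) < z := hz
        refine norm_of_nonneg ?_
        show (0:ℝ) ≤ (2*π)⁻¹ * (z * Real.exp (-((1+s^2)/2)*z^2))
        positivity
      refine ((integrable_inv_one_add_sq.const_mul ((2*π)⁻¹)).restrict).congr ?_
      exact Filter.Eventually.of_forall (fun s => (key s).symm)
  calc ∫ z in Ioi (0:ℝ), (∫ t in Iic (-c*z), g t) * g z
      = ∫ z in Ioi (0:ℝ), ∫ s in Ioi c, f z s :=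
        setIntegral_congr_fun measurableSet_Ioi step1
    _ = ∫ s in Ioi c, ∫ z in Ioi (0:ℝ), f z s := MeasureTheory.integral_integral_swap hfub
    _ = ∫ s in Ioi c, (2*π)⁻¹ * (1+s^2)⁻¹ :=
        setIntegral_congr_fun measurableSet_Ioi (fun s _ => hinner s)
    _ = (2*π)⁻¹ * (π/2 - Real.arctan c) := by
        rw [MeasureTheory.integral_const_mul, integral_Ioi_inv_one_add_sq]
    _ = 1/4 - (1/(2*π)) * Real.arctan c := by
        field_simp
        ring
end
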